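/- Let $c_1, c_2 > 0$ and let $x_1 = \frac{\sqrt{c_2}}{\sqrt{c_1}+\sqrt{c_2}} \cdot \frac{1}{\sqrt{2\sqrt{c_1 c_2}}}$, $x_2 = \frac{\sqrt{c_1}}{\sqrt{c_1}+\sqrt{c_2}} \cdot \frac{1}{\sqrt{2\sqrt{c_1 c_2}}}$. Then $(4 c_1 c_2 x_1^2 - c_2) x_2 + (2 c_1^2 + 2 c_1 c_2) x_1^3 = 0$ and $(4 c_1^3 - 8 c_1^2 c_2 + 4 c_1 c_2^2) x_1^4 + 8 c_1 c_2 x_1^2 - c_2 = 0$. -/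

import Mathlib

theorem stmt4 (c1 c2 : ℝ) (hc1 : 0 < c1) (hc2 : 0 < c2)
    (x1 x2 : ℝ)
    (hx1 : x1 = Real.sqrt c2 / (Real.sqrt c1 + Real.sqrt c2) *
      (1 / Real.sqrt (2 * Real.sqrt (c1 * c2))))
    (hx2 : x2 = Real.sqrt c1 / (Real.sqrt c1 + Real.sqrt c2) *
      (1 / Real.sqrt (2 * Real.sqrt (c1 * c2)))) :
    (4 * c1 * c2 * x1 ^ 2 - c2) * x2 + (2 * c1 ^ 2 + 2 * c1 * c2) * x1 ^ 3 = 0 ∧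
    (4 * c1 ^ 3 - 8 * c1 ^ 2 * c2 + 4 * c1 * c2 ^ 2) * x1 ^ 4 + 8 * c1 * c2 * x1 ^ 2 - c2 = 0 := by
  set a := Real.sqrt c1 with ha
  set b := Real.sqrt c2 with hb
  have ha0 : 0 < a := Real.sqrt_pos.mpr hc1
  have hb0 : 0 < b := Real.sqrt_pos.mpr hc2
  have ha2 : a ^ 2 = c1 := by rw [ha, sq, Real.mul_self_sqrt hc1.le]
  have hb2 : b ^ 2 = c2 := by rw [hb, sq, Real.mul_self_sqrt hc2.le]
  have hab : Real.sqrt (c1 * c2) = a * b := by rw [Real.sqrt_mul hc1.le, ha, hb]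
  set d := Real.sqrt (2 * Real.sqrt (c1 * c2)) with hd
  have hd0 : 0 < d := Real.sqrt_pos.mpr (by rw [hab]; positivity)
  have hd2 : d ^ 2 = 2 * (a * b) := by
    rw [hd, sq, Real.mul_self_sqrt (by rw [hab]; positivity), hab]
  have hs0 : a + b ≠ 0 := by positivity
  subst hx1 hx2
  rw [← ha2, ← hb2]
  constructor
  · field_simp
    ring_nf
    linear_combination ((-1)*a^1*b^4*d^0 + (-2)*a^2*b^3*d^0 + (-1)*a^3*b^2*d^0) * hd2
  · field_simp
    ring_nf
    linear_combination ((-1)*a^0*b^6*d^2 + (-4)*a^1*b^5*d^2 + (-2)*a^1*b^7*d^0 + (-6)*a^2*b^4*d^2 + (-4)*a^3*b^3*d^2 + (4)*a^3*b^5*d^0 + (-1)*a^4*b^2*d^2 + (-2)*a^5*b^3*d^0) * hd2
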